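/- Consider a perturbed discrete-time stochastic control system. Suppose there exist a barrier certificate candidate B : ℝⁿ → ℝ and constants λ > ε ≥ 0 and c ≥ 0 such that: (i) B(s) ≥ 0 for all s ∈ S; (ii) B(s) ≤ ε for all s ∈ S₀; (iii) B(s) ≥ λ for all s ∈ S_u; and (iv) ∫ B(g(s,δ)) dμ(δ) − B(s) ≤ c for all s ∈ S. Then for every finite time horizon T ∈ ℕ and every initial state s₀ ∈ S₀, the safety probability over the horizon T is bounded below by a linear bound: ℙ_{s₀}[ traj(s₀,ω)(t) ∉ S_u for all t ≤ T ] ≥ 1 − (B(s₀) + c·T)/λ. -/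

import Mathlib

open MeasureTheory

def traj {n : ℕ} (g : (Fin n → ℝ) → (Fin n → ℝ) → (Fin n → ℝ))
    (s₀ : Fin n → ℝ) (ω : ℕ → Fin n → ℝ) : ℕ → Fin n → ℝ
  | 0 => s₀
  | t + 1 => g (traj g s₀ ω t) (ω t)

namespace SafetyAux

variable {n : ℕ}

lemma traj_congr (g : (Fin n → ℝ) → (Fin n → ℝ) → (Fin n → ℝ)) (s : Fin n → ℝ)
    (ω ω' : ℕ → Fin n → ℝ) :
    ∀ t, (∀ k < t, ω k = ω' k) → traj g s ω t = traj g s ω' t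
  | 0, _ => rfl
  | t+1, h => by
    simp only [traj]
    rw [traj_congr g s ω ω' t (fun k hk => h k (Nat.lt_succ_of_lt hk)), h t (Nat.lt_succ_self t)]

lemma traj_shift (g : (Fin n → ℝ) → (Fin n → ℝ) → (Fin n → ℝ)) (s : Fin n → ℝ)
    (ω : ℕ → Fin n → ℝ) :
    ∀ t, traj g s ω (t+1) = traj g (g s (ω 0)) (fun k => ω (k+1)) t
  | 0 => rfl
  | t+1 => by
    show g (traj g s ω (t+1)) (ω (t+1)) = g (traj g (g s (ω 0)) (fun k => ω (k+1)) t) (ω (t+1))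
    rw [traj_shift g s ω t]

lemma meas_traj {α : Type*} [MeasurableSpace α]
    {g : (Fin n → ℝ) → (Fin n → ℝ) → (Fin n → ℝ)} (hg : Measurable (Function.uncurry g))
    {σ : α → Fin n → ℝ} (hσ : Measurable σ) {τ : α → ℕ → Fin n → ℝ}
    (hτ : ∀ k, Measurable fun a => τ a k) :
    ∀ t, Measurable fun a => traj g (σ a) (τ a) t
  | 0 => hσ
  | t+1 => by
    have ih := meas_traj hg hσ hτ t
    exact hg.comp (ih.prodMk (hτ t))

lemma meas_bad {α : Type*} [MeasurableSpace α]
    {g : (Fin n → ℝ) → (Fin n → ℝ) → (Fin n → ℝ)} (hg : Measurable (Function.uncurry g))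
    {Su : Set (Fin n → ℝ)} (hSu : MeasurableSet Su) (T : ℕ)
    {σ : α → Fin n → ℝ} (hσ : Measurable σ) {τ : α → ℕ → Fin n → ℝ}
    (hτ : ∀ k, Measurable fun a => τ a k) :
    MeasurableSet {a | ∃ t ≤ T, traj g (σ a) (τ a) t ∈ Su} := by
  have : {a | ∃ t ≤ T, traj g (σ a) (τ a) t ∈ Su}
      = ⋃ t, ⋃ _ : t ≤ T, (fun a => traj g (σ a) (τ a) t) ⁻¹' Su := by
    ext a; simp
  rw [this]
  exact MeasurableSet.iUnion fun t => MeasurableSet.iUnion fun _ =>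
    (meas_traj hg hσ hτ t) hSu

/-- extend a finite tuple of noises to an infinite sequence -/
def extSeq (T : ℕ) (x : Fin T → Fin n → ℝ) : ℕ → Fin n → ℝ :=
  fun k => if h : k < T then x ⟨k, h⟩ else 0

lemma meas_extSeq (T : ℕ) (k : ℕ) : Measurable fun x : Fin T → Fin n → ℝ => extSeq T x k := by
  unfold extSeq
  split
  · exact measurable_pi_apply _
  · exact measurable_const

lemma extSeq_shift (T : ℕ) (x : Fin (T+1) → Fin n → ℝ) :
    (fun k => extSeq (T+1) x (k+1)) = extSeq T (fun j => x j.succ) := by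
  funext k
  simp only [extSeq]
  by_cases h : k < T
  · rw [dif_pos h, dif_pos (Nat.succ_lt_succ h)]
    rfl
  · rw [dif_neg h, dif_neg (fun h' => h (Nat.lt_of_succ_lt_succ h'))]

lemma extSeq_zero (T : ℕ) (x : Fin (T+1) → Fin n → ℝ) : extSeq (T+1) x 0 = x 0 := by
  simp only [extSeq, dif_pos (Nat.succ_pos T)]
  rfl

lemma compl_W_null (μ : Measure (Fin n → ℝ)) :
    μ {δ | ∀ U : Set (Fin n → ℝ), IsOpen U → δ ∈ U → 0 < μ U}ᶜ = 0 := by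
  obtain ⟨b, hbc, -, hb⟩ := TopologicalSpace.exists_countable_basis (Fin n → ℝ)
  have hsub : {δ | ∀ U : Set (Fin n → ℝ), IsOpen U → δ ∈ U → 0 < μ U}ᶜ
      ⊆ ⋃₀ {U ∈ b | μ U = 0} := by
    intro δ hδ
    simp only [Set.mem_compl_iff, Set.mem_setOf_eq, not_forall] at hδ
    obtain ⟨U, hU, hδU, hμ⟩ := hδ
    have hμ0 : μ U = 0 := by
      rcases eq_or_ne (μ U) 0 with h | h
      · exact h
      · exact absurd (pos_iff_ne_zero.mpr h) hμ
    obtain ⟨V, hVb, hδV, hVU⟩ := hb.exists_subset_of_mem_open hδU hU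
    exact ⟨V, ⟨hVb, measure_mono_null hVU hμ0⟩, hδV⟩
  refine measure_mono_null hsub ?_
  rw [measure_sUnion_null_iff (hbc.mono (Set.sep_subset _ _))]
  exact fun U hU => hU.2

end SafetyAux

open SafetyAux

/-- Linear lower bound on probabilistic safety over a finite time horizon. -/
theorem linear_lower_bound_finite_horizon_safety
    {n : ℕ} (S S₀ Su W : Set (Fin n → ℝ))
    (g : (Fin n → ℝ) → (Fin n → ℝ) → (Fin n → ℝ))
    (μ : Measure (Fin n → ℝ)) [IsProbabilityMeasure μ]
    (hS : MeasurableSet S) (hS₀ : MeasurableSet S₀) (hSu : MeasurableSet Su)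
    (hS₀S : S₀ ⊆ S) (hSuS : Su ⊆ S) (hdisj : S₀ ∩ Su = ∅)
    (hg : Measurable (Function.uncurry g))
    -- `W` is the support of the noise distribution `μ`
    (hW : W = {δ | ∀ U : Set (Fin n → ℝ), IsOpen U → δ ∈ U → 0 < μ U})
    (hgS : ∀ s ∈ S, ∀ δ ∈ W, g s δ ∈ S)
    -- `P` is the countable product measure `μ^⊗ℕ` on noise sequences,
    -- characterized by its values on finite cylinders
    (P : Measure (ℕ → Fin n → ℝ)) [IsProbabilityMeasure P]
    (hP : ∀ (T : ℕ) (A : Fin T → Set (Fin n → ℝ)), (∀ i, MeasurableSet (A i)) →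
      P {ω | ∀ i : Fin T, ω (i : ℕ) ∈ A i} = ∏ i, μ (A i))
    -- the barrier certificate candidate: a bounded Borel-measurable function
    (B : (Fin n → ℝ) → ℝ) (hBmeas : Measurable B) (hBbdd : ∃ C, ∀ s, |B s| ≤ C)
    (lam ε c : ℝ) (hε : 0 ≤ ε) (hεlam : ε < lam) (hc : 0 ≤ c)
    (hnonneg : ∀ s ∈ S, 0 ≤ B s)
    (hinit : ∀ s ∈ S₀, B s ≤ ε)
    (hunsafe : ∀ s ∈ Su, lam ≤ B s)
    (hdec : ∀ s ∈ S, ∫ δ, B (g s δ) ∂μ - B s ≤ c) :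
    ∀ (T : ℕ), ∀ s₀ ∈ S₀,
      1 - (B s₀ + c * T) / lam ≤
        (P {ω | ∀ t ≤ T, traj g s₀ ω t ∉ Su}).toReal := by
  obtain ⟨C, hC⟩ := hBbdd
  have hlam : 0 < lam := lt_of_le_of_lt hε hεlam
  have haeW : ∀ᵐ δ ∂μ, δ ∈ W := by
    rw [ae_iff]
    have : {δ | ¬ δ ∈ W} = Wᶜ := rfl
    rw [this, hW]
    exact compl_W_null μ
  -- integrability of B ∘ (g s ·)
  have hInt : ∀ s : Fin n → ℝ, Integrable (fun δ => B (g s δ)) μ := by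
    intro s
    have hm : Measurable fun δ => B (g s δ) := hBmeas.comp hg.of_uncurry_left
    exact (integrable_const C).mono' hm.aestronglyMeasurable
      (Filter.Eventually.of_forall fun δ => by simpa [Real.norm_eq_abs] using hC (g s δ))
  -- key induction
  have key : ∀ T : ℕ, ∀ s ∈ S,
      Measure.pi (fun _ : Fin T => μ) {x | ∃ t ≤ T, traj g s (extSeq T x) t ∈ Su}
        ≤ ENNReal.ofReal ((B s + c * T) / lam) := by
    intro T
    induction T with
    | zero =>
      intro s hs
      by_cases hsu : s ∈ Su
      · have h1 : Measure.pi (fun _ : Fin 0 => μ)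
            {x | ∃ t ≤ 0, traj g s (extSeq 0 x) t ∈ Su} ≤ 1 := prob_le_one
        refine h1.trans ?_
        rw [ENNReal.one_le_ofReal]
        rw [le_div_iff₀ hlam, one_mul]
        have := hunsafe s hsu
        push_cast
        linarith
      · have he : {x : Fin 0 → Fin n → ℝ | ∃ t ≤ 0, traj g s (extSeq 0 x) t ∈ Su} = ∅ := by
          ext x
          simp only [Set.mem_setOf_eq, Set.mem_empty_iff_false, iff_false, not_exists]
          intro t
          rintro ⟨ht, hmem⟩
          interval_cases t
          exact hsu hmem
        rw [he, measure_empty]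
        exact zero_le
    | succ T ih =>
      intro s hs
      by_cases hsu : s ∈ Su
      · refine (prob_le_one).trans ?_
        rw [ENNReal.one_le_ofReal, le_div_iff₀ hlam, one_mul]
        have := hunsafe s hsu
        have : (0:ℝ) ≤ c * ((T:ℝ)+1) := by positivity
        push_cast
        linarith [hunsafe s hsu]
      · -- transfer to a product measure
        set ν := Measure.pi (fun _ : Fin T => μ) with hν
        set Bset : Set ((Fin n → ℝ) × (Fin T → Fin n → ℝ)) :=
          {p | ∃ t ≤ T, traj g (g s p.1) (extSeq T p.2) t ∈ Su} with hBsetdef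
        have hBsetMeas : MeasurableSet Bset := by
          refine meas_bad hg hSu T ?_ ?_
          · exact hg.comp (measurable_const.prodMk measurable_fst)
          · exact fun k => (meas_extSeq T k).comp measurable_snd
        have hmp := measurePreserving_piFinSuccAbove (fun _ : Fin (T+1) => μ) 0
        have hpre : (MeasurableEquiv.piFinSuccAbove (fun _ : Fin (T+1) => Fin n → ℝ) 0) ⁻¹' Bset
            = {x | ∃ t ≤ T + 1, traj g s (extSeq (T+1) x) t ∈ Su} := by
          ext x
          have hx : (MeasurableEquiv.piFinSuccAbove (fun _ : Fin (T+1) => Fin n → ℝ) 0) x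
              = (x 0, fun j => x j.succ) := by
            simp [MeasurableEquiv.piFinSuccAbove, Fin.removeNth, Fin.succAbove_zero]
            rfl
          simp only [Set.mem_preimage, hx, hBsetdef, Set.mem_setOf_eq]
          constructor
          · rintro ⟨t, ht, hmem⟩
            refine ⟨t + 1, Nat.succ_le_succ ht, ?_⟩
            rw [traj_shift, extSeq_zero, extSeq_shift]
            exact hmem
          · rintro ⟨t, ht, hmem⟩
            match t with
            | 0 => exact absurd hmem hsu
            | t + 1 =>
              rw [traj_shift, extSeq_zero, extSeq_shift] at hmem
              exact ⟨t, Nat.lt_succ_iff.mp ht, hmem⟩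
        have hmeq : Measure.pi (fun _ : Fin (T+1) => μ)
            {x | ∃ t ≤ T + 1, traj g s (extSeq (T+1) x) t ∈ Su} = (μ.prod ν) Bset := by
          rw [← hpre]
          exact hmp.measure_preimage hBsetMeas.nullMeasurableSet
        rw [hmeq, Measure.prod_apply hBsetMeas]
        have hsect : ∀ a : Fin n → ℝ,
            Prod.mk a ⁻¹' Bset = {y | ∃ t ≤ T, traj g (g s a) (extSeq T y) t ∈ Su} := by
          intro a; rfl
        calc ∫⁻ a, ν (Prod.mk a ⁻¹' Bset) ∂μ
            ≤ ∫⁻ a, ENNReal.ofReal ((B (g s a) + c * T) / lam) ∂μ := by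
              refine lintegral_mono_ae ?_
              filter_upwards [haeW] with a haW
              rw [hsect a]
              exact ih (g s a) (hgS s hs a haW)
          _ = ENNReal.ofReal (∫ a, (B (g s a) + c * T) / lam ∂μ) := by
              rw [ofReal_integral_eq_lintegral_ofReal]
              · exact ((hInt s).add (integrable_const _)).div_const lam
              · filter_upwards [haeW] with a haW
                have := hnonneg _ (hgS s hs a haW)
                positivity
          _ ≤ ENNReal.ofReal ((B s + c * (T+1 : ℕ)) / lam) := by
              apply ENNReal.ofReal_le_ofReal
              rw [integral_div, integral_add (hInt s) (integrable_const _)]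
              rw [integral_const]
              simp only [Measure.real, measure_univ, ENNReal.toReal_one, smul_eq_mul, one_mul]
              have hd := hdec s hs
              have hnum : ∫ a, B (g s a) ∂μ + c * (T:ℝ) ≤ B s + c * ((T:ℕ)+1 : ℕ) := by
                push_cast
                linarith
              gcongr
  -- now put everything together
  intro T s₀ hs₀
  set π : (ℕ → Fin n → ℝ) → (Fin T → Fin n → ℝ) := fun ω i => ω i with hπdef
  have hπ : Measurable π := measurable_pi_lambda _ fun i => measurable_pi_apply _
  have hmap : P.map π = Measure.pi (fun _ : Fin T => μ) := by
    refine (Measure.pi_eq ?_).symm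
    intro A hA
    rw [Measure.map_apply hπ (MeasurableSet.univ_pi hA)]
    have : π ⁻¹' Set.univ.pi A = {ω | ∀ i : Fin T, ω (i : ℕ) ∈ A i} := by
      ext ω; simp [Set.mem_pi, π]
    rw [this, hP T A hA]
  set Bad : Set (Fin T → Fin n → ℝ) := {x | ∃ t ≤ T, traj g s₀ (extSeq T x) t ∈ Su} with hBad
  have hBadMeas : MeasurableSet Bad :=
    meas_bad hg hSu T measurable_const (meas_extSeq T)
  have hUmeas : MeasurableSet {ω : ℕ → Fin n → ℝ | ∃ t ≤ T, traj g s₀ ω t ∈ Su} :=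
    meas_bad hg hSu T measurable_const (fun k => measurable_pi_apply k)
  have hUpre : {ω : ℕ → Fin n → ℝ | ∃ t ≤ T, traj g s₀ ω t ∈ Su} = π ⁻¹' Bad := by
    ext ω
    simp only [Set.mem_setOf_eq, Set.mem_preimage, hBad]
    have htr : ∀ t ≤ T, traj g s₀ ω t = traj g s₀ (extSeq T (π ω)) t := by
      intro t ht
      refine traj_congr g s₀ ω _ t ?_
      intro k hk
      rw [hπdef]
      simp only [extSeq]
      rw [dif_pos (lt_of_lt_of_le hk ht)]
    constructor
    · rintro ⟨t, ht, hmem⟩; exact ⟨t, ht, (htr t ht) ▸ hmem⟩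
    · rintro ⟨t, ht, hmem⟩; exact ⟨t, ht, (htr t ht) ▸ hmem⟩
  have hsafe_compl : {ω : ℕ → Fin n → ℝ | ∀ t ≤ T, traj g s₀ ω t ∉ Su}
      = {ω : ℕ → Fin n → ℝ | ∃ t ≤ T, traj g s₀ ω t ∈ Su}ᶜ := by
    ext ω; simp
  have hPU : P {ω : ℕ → Fin n → ℝ | ∃ t ≤ T, traj g s₀ ω t ∈ Su}
      ≤ ENNReal.ofReal ((B s₀ + c * T) / lam) := by
    rw [hUpre, ← Measure.map_apply hπ hBadMeas, hmap]
    exact key T s₀ (hS₀S hs₀)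
  have hr : (0:ℝ) ≤ (B s₀ + c * T) / lam := by
    have := hnonneg s₀ (hS₀S hs₀)
    positivity
  have hPUr : (P {ω : ℕ → Fin n → ℝ | ∃ t ≤ T, traj g s₀ ω t ∈ Su}).toReal
      ≤ (B s₀ + c * T) / lam :=
    ENNReal.toReal_le_of_le_ofReal hr hPU
  rw [hsafe_compl, measure_compl hUmeas (measure_ne_top P _), measure_univ,
    ENNReal.toReal_sub_of_le prob_le_one ENNReal.one_ne_top, ENNReal.toReal_one]
  linarith
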